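/- Let A_X and A_Y be two RWTAs over a commutative semiring S. Then the product RWTA A_X ⊙ A_Y realizes the Hadamard product of the series realized by A_X and A_Y: for every tree t over Σ, P_{A_X ⊙ A_Y}(t) = P_{A_X}(t) · P_{A_Y}(t). -/
import Mathlib


/-- Trees over a ranked alphabet `σ` with arity function `ar`:
`t = f(t₁,…,t_k)` where `k = ar f`. -/
inductive RTree (σ : Type) (ar : σ → ℕ) : Type where
  | node : (f : σ) → (Fin (ar f) → RTree σ ar) → RTree σ ar

variable {σ : Type} {ar : σ → ℕ}

/-- Number of nodes of a tree. -/
def RTree.size : RTree σ ar → ℕ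
  | .node _ ts => 1 + ∑ i, (ts i).size

/-- The set `SubTree(t)` of subtrees of a tree. -/
def RTree.subTree : RTree σ ar → Set (RTree σ ar)
  | .node f ts => insert (.node f ts) (⋃ i, (ts i).subTree)

open Classical in
/-- `SubTreeSeries_t`: the indicator of the whole tree plus the sum of the
series of its immediate subtrees. -/
noncomputable def RTree.subTreeSeries : RTree σ ar → RTree σ ar → ℕ
  | .node f ts, s => (if s = .node f ts then 1 else 0) + ∑ i, (ts i).subTreeSeries s

/-- The subtree of `t` rooted at position `p` (a node given by a list of child
indices), if `p` is indeed a node of `t`. -/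
def RTree.subtreeAt : RTree σ ar → List ℕ → Option (RTree σ ar)
  | t, [] => some t
  | .node f ts, i :: p => if h : i < ar f then (ts ⟨i, h⟩).subtreeAt p else none

/-- `SubTreeSet(L) = ⋃_{t ∈ L} SubTree(t)` for a finite tree language `L`. -/
def subTreeSet (L : Finset (RTree σ ar)) : Set (RTree σ ar) := ⋃ t ∈ L, t.subTree

/-- `SubTreeSeries_L = ∑_{t ∈ L} SubTreeSeries_t`. -/
noncomputable def subTreeSeriesL (L : Finset (RTree σ ar)) (s : RTree σ ar) : ℕ :=
  ∑ t ∈ L, t.subTreeSeries s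

/-- The SubTree kernel of two finite tree languages:
`∑_t SubTreeSeries_X(t) · SubTreeSeries_Y(t)` (finitely supported sum). -/
noncomputable def subTreeKernel (X Y : Finset (RTree σ ar)) : ℕ :=
  ∑ᶠ t, subTreeSeriesL X t * subTreeSeriesL Y t

theorem RTree.subTree_finite (t : RTree σ ar) : t.subTree.Finite := by
  induction t with
  | node f ts ih =>
    rw [RTree.subTree]
    exact (Set.finite_iUnion ih).insert _

theorem subTreeSet_finite (L : Finset (RTree σ ar)) : (subTreeSet L).Finite :=
  Set.Finite.biUnion L.finite_toSet fun t _ => t.subTree_finite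

/-- A Root-Weighted Tree Automaton with weights in `M`:
a finite state type `Q`, a root weight function `ν`, and a transition relation `δ`,
where `δ f q qs` means `(q, f, qs 1, …, qs k) ∈ δ` (with `k = ar f`). -/
structure RWTA (σ : Type) (ar : σ → ℕ) (M : Type) where
  Q : Type
  finQ : Finite Q
  ν : Q → M
  δ : (f : σ) → Q → (Fin (ar f) → Q) → Prop

variable {M : Type}

/-- The set of states reached on a tree:
`Δ(f(t₁,…,t_k)) = δ(f, Δ(t₁), …, Δ(t_k))`. -/
def RWTA.Δ (A : RWTA σ ar M) : RTree σ ar → Set A.Q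
  | .node f ts => {q | ∃ qs, A.δ f q qs ∧ ∀ i, qs i ∈ A.Δ (ts i)}

/-- The formal tree series realized by an RWTA: `P_A(t) = ∑_{q ∈ Δ(t)} ν(q)`
(equal to `0` when `Δ(t) = ∅`). -/
noncomputable def RWTA.P [AddCommMonoid M] (A : RWTA σ ar M) (t : RTree σ ar) : M :=
  ∑ᶠ q ∈ A.Δ t, A.ν q

/-- The SubTree automaton `STAut_L` of a finite tree language `L`: states are the
elements of `SubTreeSet(L)`, root weight of a state `t` is `SubTreeSeries_L(t)`, and
the transitions are `(f(t₁,…,t_k), f, t₁, …, t_k)` for states `f(t₁,…,t_k)`. -/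
noncomputable def STAut (L : Finset (RTree σ ar)) : RWTA σ ar ℕ where
  Q := ↥(subTreeSet L)
  finQ := (subTreeSet_finite L).to_subtype
  ν q := subTreeSeriesL L q.1
  δ f q qs := (q : RTree σ ar) = .node f fun i => (qs i : RTree σ ar)

/-- The product RWTA `A ⊙ B`: states `Q_A × Q_B`, componentwise transitions, and
root weights `ν((p,q)) = ν_A(p) · ν_B(q)`. -/
def RWTA.prod [Mul M] (A B : RWTA σ ar M) : RWTA σ ar M where
  Q := A.Q × B.Q
  finQ := by have := A.finQ; have := B.finQ; exact inferInstance
  ν pq := A.ν pq.1 * B.ν pq.2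
  δ f pq qs := A.δ f pq.1 (fun i => (qs i).1) ∧ B.δ f pq.2 fun i => (qs i).2

/-- The product RWTA realizes the Hadamard (pointwise) product of the realized
series: `P_{A⊙B}(t) = P_A(t) · P_B(t)`. -/
theorem prod_realizes_hadamard {S : Type} [CommSemiring S] (A B : RWTA σ ar S)
    (t : RTree σ ar) :
    (A.prod B).P t = A.P t * B.P t := by
  haveI := A.finQ; haveI := B.finQ
  have hΔ : ∀ t : RTree σ ar, (A.prod B).Δ t = (A.Δ t) ×ˢ (B.Δ t) := by
    intro t
    induction t with
    | node f ts ih =>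
      ext ⟨p, q⟩
      show (∃ qs, (A.prod B).δ f (p, q) qs ∧ ∀ i, qs i ∈ (A.prod B).Δ (ts i)) ↔
        p ∈ A.Δ (.node f ts) ∧ q ∈ B.Δ (.node f ts)
      constructor
      · rintro ⟨qs, ⟨hA, hB⟩, hmem⟩
        refine ⟨⟨fun i => (qs i).1, hA, fun i => ?_⟩, ⟨fun i => (qs i).2, hB, fun i => ?_⟩⟩
        · have h := hmem i; rw [ih i] at h; exact h.1
        · have h := hmem i; rw [ih i] at h; exact h.2
      · rintro ⟨⟨ps, hA, hpm⟩, ⟨rs, hB, hrm⟩⟩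
        exact ⟨fun i => (ps i, rs i), ⟨hA, hB⟩,
          fun i => by rw [ih i]; exact ⟨hpm i, hrm i⟩⟩
  unfold RWTA.P
  rw [hΔ t]
  show (∑ᶠ (q : A.Q × B.Q) (_ : q ∈ A.Δ t ×ˢ B.Δ t), A.ν q.1 * B.ν q.2) = _
  have hA := Set.toFinite (A.Δ t)
  have hB := Set.toFinite (B.Δ t)
  rw [finsum_mem_eq_finite_toFinset_sum _ (hA.prod hB),
      finsum_mem_eq_finite_toFinset_sum _ hA,
      finsum_mem_eq_finite_toFinset_sum _ hB]
  have hfs : (hA.prod hB).toFinset = hA.toFinset ×ˢ hB.toFinset := by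
    ext ⟨p, q⟩; simp
  rw [hfs, Finset.sum_product, Finset.sum_mul_sum]
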